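/- Let N ≥ 2 and let S be a subset of the index set {0,…,N−1} with 1 ≤ |S| = M ≤ N − 1. Let u ∈ ℂ^N be the unit vector with all entries equal to 1/√N, let P_𝓜 be the orthogonal projection onto the span of the standard basis vectors indexed by S, and for s ∈ [0,1] define the Hermitian matrix H(s) := (1 − s)·(1 − u·u*) + s·(1 − P_𝓜), where u·u* is the rank-one projection onto u. Then every eigenvalue of H(s) belongs to the set { (1 − √(1 − 4(1 − M/N)·s·(1 − s)))/2, (1 + √(1 − 4(1 − M/N)·s·(1 − s)))/2, 1 − s, 1 }. -/

import Mathlib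

open Matrix Polynomial

lemma grover_key {n : Type*} [Fintype n] [DecidableEq n] (A B H : Matrix n n ℂ) (r sc c : ℂ)
    (hA : A * A = A) (hB : B * B = B) (hABA : A * (B * A) = r • A)
    (hH : H = 1 - ((1 - sc) • A + sc • B)) (hc : c = (1 - r) * sc * (1 - sc)) :
    (H - 1) * (H - (1 - sc) • 1) * (H * H - H + c • 1) = 0 := by
  have hA1 : ∀ x : Matrix n n ℂ, A * (A * x) = A * x := by
    intro x; rw [← mul_assoc, hA]
  have hB1 : ∀ x : Matrix n n ℂ, B * (B * x) = B * x := by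
    intro x; rw [← mul_assoc, hB]
  have hABA1 : ∀ x : Matrix n n ℂ, A * (B * (A * x)) = r • (A * x) := by
    intro x; rw [← mul_assoc, ← mul_assoc, mul_assoc A B A, hABA, smul_mul_assoc]
  subst hH hc
  simp only [sub_mul, mul_sub, add_mul, mul_add, smul_mul_assoc, mul_smul_comm, mul_one,
    one_mul, smul_smul, smul_sub, smul_add, mul_assoc, hA, hB, hABA, hA1, hB1, hABA1]
  match_scalars <;> ring

theorem stmt13 (N : ℕ) (hN : 2 ≤ N) (S : Finset (Fin N)) (M : ℕ)
    (hM : M = S.card) (hM1 : 1 ≤ M) (hM2 : M ≤ N - 1)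
    (u : Fin N → ℂ) (hu : u = fun _ => ((1 / Real.sqrt N : ℝ) : ℂ))
    (Pm : Matrix (Fin N) (Fin N) ℂ)
    (hPm : Pm = Matrix.diagonal fun i => if i ∈ S then (1 : ℂ) else 0)
    (s : ℝ) (hs : s ∈ Set.Icc (0:ℝ) 1)
    (H : Matrix (Fin N) (Fin N) ℂ)
    (hH : H = (1 - s) • ((1 : Matrix (Fin N) (Fin N) ℂ) - vecMulVec u (star u)) +
        s • ((1 : Matrix (Fin N) (Fin N) ℂ) - Pm)) :
    ∀ z ∈ spectrum ℂ H,
      z ∈ ({(((1 - Real.sqrt (1 - 4 * (1 - (M : ℝ) / N) * s * (1 - s))) / 2 : ℝ) : ℂ),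
            (((1 + Real.sqrt (1 - 4 * (1 - (M : ℝ) / N) * s * (1 - s))) / 2 : ℝ) : ℂ),
            ((1 - s : ℝ) : ℂ), (1 : ℂ)} : Set ℂ) := by
  intro z hz
  haveI : Nonempty (Fin N) := ⟨⟨0, by omega⟩⟩
  have hN0 : (0:ℝ) < N := by
    have : 0 < N := by omega
    exact_mod_cast this
  have hNC : (N:ℂ) ≠ 0 := by
    exact_mod_cast (show (N:ℝ) ≠ 0 from ne_of_gt hN0)
  -- entries of A
  have hAval : vecMulVec u (star u) = Matrix.of (fun _ _ => ((N:ℂ))⁻¹) := by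
    ext i j
    have hss : Real.sqrt N * Real.sqrt N = N := Real.mul_self_sqrt hN0.le
    simp only [vecMulVec_apply, hu, Pi.star_apply, Complex.star_def,
      Complex.conj_ofReal, Matrix.of_apply, ← Complex.ofReal_mul]
    rw [show (1 / Real.sqrt N) * (1 / Real.sqrt N) = (N:ℝ)⁻¹ by
      rw [div_mul_div_comm, one_mul, hss, one_div]]
    push_cast
    ring
  set A : Matrix (Fin N) (Fin N) ℂ := Matrix.of (fun _ _ => ((N:ℂ))⁻¹) with hAdef
  have hA : A * A = A := by
    ext i j
    simp only [hAdef, mul_apply, Matrix.of_apply, Finset.sum_const, Finset.card_univ,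
      Fintype.card_fin, nsmul_eq_mul]
    field_simp
  have hB : Pm * Pm = Pm := by
    rw [hPm, diagonal_mul_diagonal]
    refine congrArg _ ?_
    funext i
    by_cases h : i ∈ S <;> simp [h]
  have hsumS : (∑ k : Fin N, (if k ∈ S then (1:ℂ) else 0)) = (M:ℂ) := by
    rw [Finset.sum_ite_mem, Finset.univ_inter, Finset.sum_const, hM]
    simp
  have hABA : A * (Pm * A) = ((M:ℂ)/N) • A := by
    ext i j
    simp only [hAdef, hPm, mul_apply, Matrix.of_apply, diagonal_apply, ite_mul, zero_mul,
      Finset.sum_ite_eq, Finset.mem_univ, if_true, Matrix.smul_apply, smul_eq_mul]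
    trans ((N:ℂ)⁻¹ * (N:ℂ)⁻¹ * ∑ k : Fin N, (if k ∈ S then (1:ℂ) else 0))
    · rw [Finset.mul_sum]
      exact Finset.sum_congr rfl (fun k _ => by split_ifs <;> ring)
    · rw [hsumS]; field_simp
  -- rewrite H
  have hrs : ∀ (x : ℝ) (MM : Matrix (Fin N) (Fin N) ℂ), x • MM = ((x:ℂ)) • MM :=
    fun x MM => by rw [← algebraMap_smul ℂ x MM, Complex.coe_algebraMap]
  have hHK : H = 1 - ((1 - (s:ℂ)) • A + (s:ℂ) • Pm) := by
    rw [hH, hAval, hrs (1-s), hrs s]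
    push_cast
    rw [smul_sub, smul_sub]
    module
  have key := grover_key A Pm H ((M:ℂ)/N) (s:ℂ)
    ((1 - (M:ℂ)/N) * (s:ℂ) * (1 - (s:ℂ))) hA hB hABA hHK rfl
  -- polynomial
  set c : ℂ := (1 - (M:ℂ)/N) * (s:ℂ) * (1 - (s:ℂ)) with hcdef
  set p : ℂ[X] := (X - C 1) * (X - C (1 - (s:ℂ))) * (X * X - X + C c) with hpdef
  have hp : aeval H p = 0 := by
    simp only [hpdef, _root_.map_mul, map_sub, map_add, aeval_X, aeval_C, _root_.map_one,
      Algebra.algebraMap_eq_smul_one]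
    simpa [sub_smul] using key
  have himg : eval z p ∈ spectrum ℂ (aeval H p) :=
    spectrum.subset_polynomial_aeval H p ⟨z, hz, rfl⟩
  rw [hp, spectrum.zero_eq] at himg
  have hev : (z - 1) * (z - (1 - (s:ℂ))) * (z * z - z + c) = 0 := by
    simpa [hpdef, eval_mul, eval_sub, eval_add, eval_C, eval_X] using himg
  -- real discriminant
  have hMN : (M:ℝ) / N ≤ 1 := by
    rw [div_le_one hN0]
    exact_mod_cast (show M ≤ N by omega)
  have hMN0 : (0:ℝ) ≤ (M:ℝ) / N := by positivity
  obtain ⟨hs0, hs1⟩ := hs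
  have hΔ0 : (0:ℝ) ≤ 1 - 4 * (1 - (M : ℝ) / N) * s * (1 - s) := by
    nlinarith [sq_nonneg (2*s - 1), mul_nonneg hs0 (sub_nonneg.mpr hs1),
      mul_nonneg (mul_nonneg hs0 (sub_nonneg.mpr hs1)) (sub_nonneg.mpr hMN)]
  set d : ℝ := Real.sqrt (1 - 4 * (1 - (M : ℝ) / N) * s * (1 - s)) with hddef
  have hdd' : (d:ℂ) * (d:ℂ) = 1 - 4 * (1 - (M:ℂ)/N) * (s:ℂ) * (1 - (s:ℂ)) := by
    rw [← Complex.ofReal_mul, Real.mul_self_sqrt hΔ0]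
    push_cast
    ring
  have hprod : (((1 - d) / 2 : ℝ) : ℂ) * (((1 + d) / 2 : ℝ) : ℂ) = c := by
    rw [hcdef]
    push_cast
    linear_combination (-(1:ℂ)/4) * hdd'
  have hsum : (((1 - d) / 2 : ℝ) : ℂ) + (((1 + d) / 2 : ℝ) : ℂ) = 1 := by
    push_cast; ring
  have hquad : z * z - z + c
      = (z - (((1 - d) / 2 : ℝ) : ℂ)) * (z - (((1 + d) / 2 : ℝ) : ℂ)) := by
    linear_combination z * hsum - hprod
  simp only [Set.mem_insert_iff, Set.mem_singleton_iff]
  rcases mul_eq_zero.mp hev with h12 | h3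
  · rcases mul_eq_zero.mp h12 with h1 | h2
    · right; right; right
      exact sub_eq_zero.mp h1
    · right; right; left
      rw [sub_eq_zero.mp h2]
      push_cast
      ring
  · rw [hquad] at h3
    rcases mul_eq_zero.mp h3 with h | h
    · left
      rw [sub_eq_zero.mp h, hddef]
    · right; left
      rw [sub_eq_zero.mp h, hddef]
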